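/- Let 𝓕 be a finite family of distinct sets with levels 𝓕₁, …, 𝓕_t and auxiliary graph H, and let α be the size of the largest union-free subfamily of 𝓕. If a₁ < a₂ < ⋯ < a_k are the vertices of an independent set in H and (b, a₁) is an edge of H with b < a₁, then Σ_{j=1}^{k} |𝓕_{a_j}| ≤ α − 2(a₁ − b) + 1. -/

import Mathlib

open scoped Classical in
/-- The maximal (by inclusion) sets of a family. -/
noncomputable def maxSets (G : Finset (Finset ℕ)) : Finset (Finset ℕ) :=
  G.filter fun X => ∀ Y ∈ G, ¬ X ⊂ Y

/-- `rem F k` is what remains of the family `F` after `k` rounds of peeling off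
the maximal sets. -/
noncomputable def rem (F : Finset (Finset ℕ)) : ℕ → Finset (Finset ℕ)
  | 0 => F
  | k + 1 => rem F k \ maxSets (rem F k)

open scoped Classical in
/-- The length `t` of the longest chain (under inclusion) in the family `F`. -/
noncomputable def famHeight (F : Finset (Finset ℕ)) : ℕ :=
  (Finset.filter (fun C : Finset (Finset ℕ) => IsChain (· ⊆ ·) (C : Set (Finset ℕ))) F.powerset).sup Finset.card

/-- The `i`-th level `𝓕ᵢ` of the family `F`: with `t = famHeight F`,
`𝓕_t` is the family of maximal sets of `F` and, downwards, `𝓕ᵢ` is the family of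
maximal sets of `F \ (𝓕_{i+1} ∪ ⋯ ∪ 𝓕_t)`.  A set has *rank* `i` if it lies in
`level F i`. -/
noncomputable def level (F : Finset (Finset ℕ)) (i : ℕ) : Finset (Finset ℕ) :=
  maxSets (rem F (famHeight F - i))

/-- The auxiliary graph `H = H(F)` on the vertex set `{1, …, t}`, `t = famHeight F`:
the pair `(i, i')` with `i < i'` is an edge if there exist two disjoint chains
`X` and `Y`, each consisting of exactly one set of each rank `j` for `i ≤ j ≤ i' - 1`,
such that at most one set in `{X j ∪ Y k}` has rank `i'` and every other set of this
form has rank greater than `i'` or does not belong to `F`. -/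
def HEdge (F : Finset (Finset ℕ)) (i i' : ℕ) : Prop :=
  1 ≤ i ∧ i < i' ∧ i' ≤ famHeight F ∧
  ∃ X Y : ℕ → Finset ℕ,
    (∀ j, i ≤ j → j < i' → X j ∈ level F j) ∧
    (∀ j, i ≤ j → j < i' → Y j ∈ level F j) ∧
    (∀ j k, i ≤ j → j < k → k < i' → X j ⊂ X k) ∧
    (∀ j k, i ≤ j → j < k → k < i' → Y j ⊂ Y k) ∧
    (∀ j k, i ≤ j → j < i' → i ≤ k → k < i' → X j ≠ Y k) ∧
    (∀ j k, i ≤ j → j < i' → i ≤ k → k < i' →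
      X j ∪ Y k ∉ F ∨ X j ∪ Y k ∈ level F i' ∨
        ∃ r, i' < r ∧ r ≤ famHeight F ∧ X j ∪ Y k ∈ level F r) ∧
    (∀ j₁ k₁ j₂ k₂, i ≤ j₁ → j₁ < i' → i ≤ k₁ → k₁ < i' →
      i ≤ j₂ → j₂ < i' → i ≤ k₂ → k₂ < i' →
      X j₁ ∪ Y k₁ ∈ level F i' → X j₂ ∪ Y k₂ ∈ level F i' →
      X j₁ ∪ Y k₁ = X j₂ ∪ Y k₂)

/-- A family of sets is *union-free* if there are no three distinct sets
`X, Y, Z` in the family with `X ∪ Y = Z`. -/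
def UnionFree (F : Finset (Finset ℕ)) : Prop :=
  ∀ X ∈ F, ∀ Y ∈ F, ∀ Z ∈ F, X ≠ Y → X ≠ Z → Y ≠ Z → X ∪ Y ≠ Z

section Aux
open Finset
variable {F G : Finset (Finset ℕ)} {W V A C : Finset ℕ}

lemma maxSets_subset : maxSets G ⊆ G := filter_subset _ _

lemma mem_maxSets : W ∈ maxSets G ↔ W ∈ G ∧ ∀ Y ∈ G, ¬ W ⊂ Y := by
  classical
  simp [maxSets]

lemma rem_succ_subset (k : ℕ) : rem F (k + 1) ⊆ rem F k := sdiff_subset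

lemma rem_antitone {k m : ℕ} (h : k ≤ m) : rem F m ⊆ rem F k := by
  induction m with
  | zero => simpa [Nat.le_zero.mp h] using Finset.Subset.refl _
  | succ n ih =>
    rcases Nat.lt_or_ge k (n+1) with h'|h'
    · exact (rem_succ_subset n).trans (ih (Nat.lt_succ_iff.mp h'))
    · have : k = n + 1 := le_antisymm h h'
      subst this; exact Finset.Subset.refl _

lemma rem_subset (k : ℕ) : rem F k ⊆ F := rem_antitone (Nat.zero_le k)

lemma level_subset {i : ℕ} : level F i ⊆ F :=
  maxSets_subset.trans (rem_subset _)

lemma exists_max_above (hW : W ∈ G) : ∃ V ∈ maxSets G, W ⊆ V := by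
  have hne : (G.filter fun U => W ⊆ U).Nonempty := ⟨W, by simp [hW]⟩
  obtain ⟨V, hV, hmax⟩ : ∃ V ∈ G.filter (fun U => W ⊆ U), ∀ x ∈ G.filter (fun U => W ⊆ U), ¬ V < x := by
    obtain ⟨V, hV⟩ := Finset.exists_maximal hne
    exact ⟨V, hV.prop, fun x hx hlt => lt_irrefl V (lt_of_lt_of_le hlt (hV.2 hx hlt.le))⟩
  rw [mem_filter] at hV
  refine ⟨V, mem_maxSets.mpr ⟨hV.1, ?_⟩, hV.2⟩
  intro Y hY hVY
  exact hmax Y (mem_filter.mpr ⟨hY, hV.2.trans hVY.subset⟩) hVY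

lemma rank_unique {i j : ℕ} (hi : W ∈ level F i) (hj : W ∈ level F j)
    (hit : i ≤ famHeight F) (hjt : j ≤ famHeight F) : i = j := by
  by_contra hne
  wlog hij : i < j generalizing i j
  · exact this hj hi hjt hit (Ne.symm hne) (by omega)
  set t := famHeight F
  have h1 : t - j + 1 ≤ t - i := by omega
  have h2 : W ∈ rem F (t - j + 1) := by
    exact rem_antitone h1 (maxSets_subset hi)
  have : W ∉ maxSets (rem F (t - j)) := by
    have := (mem_sdiff.mp h2).2
    exact this
  exact this hj

lemma rank_mono {i r : ℕ} (hi : A ∈ level F i) (hr : C ∈ level F r)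
    (hAC : A ⊂ C) : i < r := by
  set t := famHeight F
  have hmax := (mem_maxSets.mp hi).2
  have hC : C ∉ rem F (t - i) := fun h => hmax C h hAC
  have hC' : C ∈ rem F (t - r) := maxSets_subset hr
  by_contra h
  exact hC (rem_antitone (by omega) hC')

lemma step_up {r : ℕ} (hW : W ∈ level F r) (hr : r + 1 ≤ famHeight F) :
    ∃ V ∈ level F (r + 1), W ⊂ V := by
  set t := famHeight F
  have hk : t - r = (t - (r + 1)) + 1 := by omega
  have hW' : W ∈ rem F ((t - (r+1)) + 1) := by
    rw [← hk]; exact maxSets_subset hW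
  rw [show rem F ((t - (r+1)) + 1) = rem F (t - (r+1)) \ maxSets (rem F (t - (r+1))) from rfl,
    mem_sdiff] at hW'
  obtain ⟨hWk, hWnm⟩ := hW'
  have : ∃ U ∈ rem F (t - (r+1)), W ⊂ U := by
    by_contra h
    push_neg at h
    exact hWnm (mem_maxSets.mpr ⟨hWk, h⟩)
  obtain ⟨U, hU, hWU⟩ := this
  obtain ⟨V, hV, hUV⟩ := exists_max_above hU
  exact ⟨V, hV, hWU.trans_subset hUV⟩

lemma extend_aux : ∀ (d r : ℕ) (W : Finset ℕ), W ∈ level F r → r + d ≤ famHeight F →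
    ∃ g : ℕ → Finset ℕ, g r = W ∧ (∀ j, r ≤ j → j ≤ r + d → g j ∈ level F j) ∧
      (∀ j k, r ≤ j → j < k → k ≤ r + d → g j ⊂ g k) := by
  intro d
  induction d with
  | zero =>
    intro r W hW _
    refine ⟨fun _ => W, rfl, ?_, ?_⟩
    · intro j h1 h2
      have : j = r := by omega
      subst this; exact hW
    · intro j k h1 h2 h3; omega
  | succ d ih =>
    intro r W hW hrd
    obtain ⟨V, hV, hWV⟩ := step_up hW (by omega)
    obtain ⟨g', hg'r, hg'mem, hg'mono⟩ := ih (r+1) V hV (by omega)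
    refine ⟨fun j => if j ≤ r then W else g' j, by simp, ?_, ?_⟩
    · intro j h1 h2
      by_cases hj : j ≤ r
      · have : j = r := by omega
        subst this; simpa using hW
      · simp only [if_neg hj]
        exact hg'mem j (by omega) (by omega)
    · intro j k h1 h2 h3
      by_cases hj : j ≤ r
      · have hjr : j = r := by omega
        subst hjr
        simp only [if_pos le_rfl, if_neg (by omega : ¬ k ≤ j)]
        rcases Nat.lt_or_ge (j+1) k with hk | hk
        · exact hWV.trans_subset (hg'r ▸ (hg'mono (j+1) k le_rfl hk (by omega)).subset)
        · have : k = j + 1 := by omega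
          subst this; rwa [hg'r]
      · simp only [if_neg hj, if_neg (by omega : ¬ k ≤ r)]
        exact hg'mono j k (by omega) h2 (by omega)

lemma extend {r : ℕ} (hW : W ∈ level F r) (hr : r ≤ famHeight F) :
    ∃ g : ℕ → Finset ℕ, g r = W ∧ (∀ j, r ≤ j → j ≤ famHeight F → g j ∈ level F j) ∧
      (∀ j k, r ≤ j → j < k → k ≤ famHeight F → g j ⊂ g k) ∧
      (∀ j, r ≤ j → j ≤ famHeight F → W ⊆ g j) := by
  obtain ⟨g, h1, h2, h3⟩ := extend_aux (famHeight F - r) r W hW (by omega)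
  refine ⟨g, h1, fun j a b => h2 j a (by omega), fun j k a b c => h3 j k a b (by omega), ?_⟩
  intro j hrj hjt
  rcases eq_or_lt_of_le hrj with h | h
  · subst h; exact le_of_eq h1.symm
  · exact h1 ▸ (h3 r j le_rfl h (by omega)).subset

end Aux

section Aux2
open Finset
variable {F : Finset (Finset ℕ)} {W : Finset ℕ}

lemma chain_of_rem : ∀ (k : ℕ) (W : Finset ℕ), W ∈ rem F k →
    ∃ g : ℕ → Finset ℕ, g 0 = W ∧ (∀ j, j ≤ k → g j ∈ F) ∧
      (∀ j l, j < l → l ≤ k → g j ⊂ g l) := by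
  intro k
  induction k with
  | zero =>
    intro W hW
    exact ⟨fun _ => W, rfl, fun j hj => by exact hW, fun j l h1 h2 => by omega⟩
  | succ k ih =>
    intro W hW
    rw [show rem F (k+1) = rem F k \ maxSets (rem F k) from rfl, mem_sdiff] at hW
    obtain ⟨hWk, hWnm⟩ := hW
    have : ∃ U ∈ rem F k, W ⊂ U := by
      by_contra h
      push_neg at h
      exact hWnm (mem_maxSets.mpr ⟨hWk, h⟩)
    obtain ⟨U, hU, hWU⟩ := this
    obtain ⟨g', hg'U, hg'F, hg'mono⟩ := ih U hU
    have hg'0 : W ⊂ g' 0 := hg'U ▸ hWU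
    refine ⟨fun j => if j = 0 then W else g' (j - 1), rfl, ?_, ?_⟩
    · intro j hj
      by_cases h : j = 0
      · simpa [h] using rem_subset k hWk
      · simp only [if_neg h]; exact hg'F (j-1) (by omega)
    · intro j l h1 h2
      by_cases h : j = 0
      · subst h
        simp only [if_pos rfl, if_neg (by omega : ¬ l = 0)]
        rcases Nat.lt_or_ge 1 l with hl | hl
        · exact hg'0.trans_subset (hg'mono 0 (l-1) (by omega) (by omega)).subset
        · have : l = 1 := by omega
          subst this; simpa using hg'0
      · simp only [if_neg h, if_neg (by omega : ¬ l = 0)]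
        exact hg'mono (j-1) (l-1) (by omega) (by omega)

end Aux2

section Aux3
open Finset
variable {F : Finset (Finset ℕ)} {W : Finset ℕ}

lemma succ_le_famHeight_of_mem_rem {k : ℕ} (hW : W ∈ rem F k) : k + 1 ≤ famHeight F := by
  classical
  obtain ⟨g, hg0, hgF, hgmono⟩ := chain_of_rem k W hW
  set Cset : Finset (Finset ℕ) := (Finset.range (k+1)).image g with hC
  have hsub : Cset ⊆ F := by
    intro x hx
    obtain ⟨j, hj, rfl⟩ := mem_image.mp hx
    exact hgF j (by simpa using Nat.lt_succ_iff.mp (mem_range.mp hj))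
  have hchain : IsChain (· ⊆ ·) (Cset : Set (Finset ℕ)) := by
    intro x hx y hy hxy
    simp only [hC, coe_image, Set.mem_image, coe_range, Set.mem_Iio] at hx hy
    obtain ⟨j, hj, rfl⟩ := hx
    obtain ⟨l, hl, rfl⟩ := hy
    rcases lt_trichotomy j l with h|h|h
    · exact Or.inl (hgmono j l h (by omega)).subset
    · exact absurd (by rw [h]) hxy
    · exact Or.inr (hgmono l j h (by omega)).subset
  have hcard : Cset.card = k + 1 := by
    rw [hC, Finset.card_image_of_injOn, Finset.card_range]
    intro j hj l hl hjl
    simp only [coe_range, Set.mem_Iio] at hj hl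
    by_contra hne
    rcases lt_or_gt_of_ne hne with h|h
    · exact (hgmono j l h (by omega)).ne hjl
    · exact (hgmono l j h (by omega)).ne hjl.symm
  calc k + 1 = Cset.card := hcard.symm
    _ ≤ famHeight F := by
        apply Finset.le_sup
        rw [mem_filter, mem_powerset]
        exact ⟨hsub, hchain⟩

lemma rank_total_aux : ∀ (d k : ℕ), famHeight F ≤ k + d → W ∈ rem F k →
    ∃ m, W ∈ maxSets (rem F m) ∧ m < famHeight F := by
  intro d
  induction d with
  | zero =>
    intro k hk hW
    have := succ_le_famHeight_of_mem_rem hW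
    omega
  | succ d ih =>
    intro k hk hW
    by_cases h : W ∈ maxSets (rem F k)
    · exact ⟨k, h, by have := succ_le_famHeight_of_mem_rem hW; omega⟩
    · exact ih (k+1) (by omega) (mem_sdiff.mpr ⟨hW, h⟩)

lemma rank_total (hW : W ∈ F) : ∃ r, 1 ≤ r ∧ r ≤ famHeight F ∧ W ∈ level F r := by
  obtain ⟨m, hm, hmt⟩ := rank_total_aux (famHeight F) 0 (by omega) (show W ∈ rem F 0 from hW)
  refine ⟨famHeight F - m, by omega, by omega, ?_⟩
  have : famHeight F - (famHeight F - m) = m := by omega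
  rw [level, this]
  exact hm

end Aux3

section Key
open Finset
variable {F : Finset (Finset ℕ)}

lemma key {A B C : Finset ℕ} {iA iB iC i : ℕ}
    (hA : A ∈ level F iA) (hB : B ∈ level F iB) (hC : C ∈ level F iC)
    (hCt : iC ≤ famHeight F) (hABC : A ∪ B = C) (hAB : A ≠ B)
    (hi1 : 1 ≤ i) (hiA : iA ≤ i) (hiB : iB ≤ i) (hiC : i < iC) :
    HEdge F i iC := by
  obtain ⟨gA, hgAr, hgAmem, hgAmono, hgAsup⟩ := extend hA (by omega)
  obtain ⟨gB, hgBr, hgBmem, hgBmono, hgBsup⟩ := extend hB (by omega)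
  have hCsub : ∀ j k, i ≤ j → j < iC → i ≤ k → k < iC → C ⊆ gA j ∪ gB k := by
    intro j k h1 h2 h3 h4
    rw [← hABC]
    exact Finset.union_subset_union (hgAsup j (by omega) (by omega)) (hgBsup k (by omega) (by omega))
  refine ⟨hi1, hiC, hCt, gA, gB, ?_, ?_, ?_, ?_, ?_, ?_, ?_⟩
  · exact fun j h1 h2 => hgAmem j (by omega) (by omega)
  · exact fun j h1 h2 => hgBmem j (by omega) (by omega)
  · exact fun j k h1 h2 h3 => hgAmono j k (by omega) h2 (by omega)
  · exact fun j k h1 h2 h3 => hgBmono j k (by omega) h2 (by omega)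
  · intro j k h1 h2 h3 h4 heq
    have hsub : C ⊆ gA j := by
      have := hCsub j k h1 h2 h3 h4
      rwa [← heq, Finset.union_self] at this
    rcases eq_or_ne C (gA j) with h | h
    · have := rank_unique (h ▸ hC) (hgAmem j (by omega) (by omega)) hCt (by omega)
      omega
    · have := rank_mono hC (hgAmem j (by omega) (by omega)) (ssubset_of_subset_of_ne hsub h)
      omega
  · intro j k h1 h2 h3 h4
    by_cases hWF : gA j ∪ gB k ∈ F
    · obtain ⟨r, hr1, hrt, hWr⟩ := rank_total hWF
      rcases eq_or_ne C (gA j ∪ gB k) with h | h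
      · exact Or.inr (Or.inl (h ▸ hC))
      · have := rank_mono hC hWr (ssubset_of_subset_of_ne (hCsub j k h1 h2 h3 h4) h)
        exact Or.inr (Or.inr ⟨r, this, hrt, hWr⟩)
    · exact Or.inl hWF
  · intro j1 k1 j2 k2 a1 a2 a3 a4 a5 a6 a7 a8 hm1 hm2
    have e1 : C = gA j1 ∪ gB k1 := by
      rcases eq_or_ne C (gA j1 ∪ gB k1) with h | h
      · exact h
      · have := rank_mono hC hm1 (ssubset_of_subset_of_ne (hCsub j1 k1 a1 a2 a3 a4) h)
        omega
    have e2 : C = gA j2 ∪ gB k2 := by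
      rcases eq_or_ne C (gA j2 ∪ gB k2) with h | h
      · exact h
      · have := rank_mono hC hm2 (ssubset_of_subset_of_ne (hCsub j2 k2 a5 a6 a7 a8) h)
        omega
    rw [← e1, ← e2]

end Key

/-- Second part of Lemma 2: let `α` be the size of the largest union-free subfamily
of `F`, let `a₁ < a₂ < ⋯ < a_k` be the vertices of an independent set `I` in the
auxiliary graph `H` (so `a₁` is the least element of `I`), and suppose `(b, a₁)` is
an edge of `H` with `b < a₁`.  Then `∑_{j ∈ I} |𝓕_j| ≤ α - 2(a₁ - b) + 1`. -/
theorem sum_levels_indep_le_of_edge (F : Finset (Finset ℕ)) (α : ℕ)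
    (hα : IsGreatest {k | ∃ G ⊆ F, UnionFree G ∧ G.card = k} α)
    (I : Finset ℕ) (hI : I ⊆ Finset.Icc 1 (famHeight F))
    (hind : ∀ x ∈ I, ∀ y ∈ I, ¬ HEdge F x y)
    (a₁ : ℕ) (ha₁ : a₁ ∈ I) (ha₁min : ∀ x ∈ I, a₁ ≤ x)
    (b : ℕ) (hb : b < a₁) (hedge : HEdge F b a₁) :
    ((∑ j ∈ I, (level F j).card : ℤ)) ≤ (α : ℤ) - 2 * ((a₁ : ℤ) - (b : ℤ)) + 1 := by
  classical
  obtain ⟨hb1, hba, hat, X, Y, hX, hY, hXm, hYm, hne, hun, huq⟩ := hedge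
  set t := famHeight F with ht
  have hIt : ∀ a ∈ I, 1 ≤ a ∧ a ≤ t := by
    intro a ha
    have := hI ha
    rw [Finset.mem_Icc] at this
    exact this
  set J : Finset ℕ := Finset.Icc b (a₁ - 1) with hJ
  have hmemJ : ∀ j, j ∈ J ↔ b ≤ j ∧ j < a₁ := by
    intro j; rw [hJ, Finset.mem_Icc]; omega
  set L := I.biUnion (level F) with hL
  set CX := J.image X with hCX
  set CY := J.image Y with hCY
  set S := (level F a₁).filter (fun W => ∃ j ∈ J, ∃ k ∈ J, W = X j ∪ Y k) with hS
  set G := (L ∪ CX ∪ CY) \ S with hG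
  -- source lemma
  have hsrc : ∀ W ∈ L ∪ CX ∪ CY, ∃ r, 1 ≤ r ∧ r ≤ t ∧ W ∈ level F r ∧
      (r ∈ I ∨ (b ≤ r ∧ r < a₁ ∧ (W = X r ∨ W = Y r))) := by
    intro W hW
    rw [Finset.mem_union, Finset.mem_union] at hW
    rcases hW with (hW | hW) | hW
    · rw [hL, Finset.mem_biUnion] at hW
      obtain ⟨a, ha, hWa⟩ := hW
      exact ⟨a, (hIt a ha).1, (hIt a ha).2, hWa, Or.inl ha⟩
    · rw [hCX, Finset.mem_image] at hW
      obtain ⟨j, hj, rfl⟩ := hW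
      rw [hmemJ] at hj
      exact ⟨j, by omega, by omega, hX j hj.1 hj.2, Or.inr ⟨hj.1, hj.2, Or.inl rfl⟩⟩
    · rw [hCY, Finset.mem_image] at hW
      obtain ⟨j, hj, rfl⟩ := hW
      rw [hmemJ] at hj
      exact ⟨j, by omega, by omega, hY j hj.1 hj.2, Or.inr ⟨hj.1, hj.2, Or.inr rfl⟩⟩
  have hGsub : G ⊆ F := by
    intro W hW
    rw [hG, Finset.mem_sdiff] at hW
    obtain ⟨r, _, _, hWr, _⟩ := hsrc W hW.1
    exact level_subset hWr
  -- union-freeness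
  have hGuf : UnionFree G := by
    intro A hA B hB C hC hAB hAC hBC heq
    rw [hG, Finset.mem_sdiff] at hA hB hC
    obtain ⟨rA, hrA1, hrAt, hrAlv, hrAsrc⟩ := hsrc A hA.1
    obtain ⟨rB, hrB1, hrBt, hrBlv, hrBsrc⟩ := hsrc B hB.1
    obtain ⟨rC, hrC1, hrCt, hrClv, hrCsrc⟩ := hsrc C hC.1
    have hsubAC : A ⊂ C :=
      ssubset_of_subset_of_ne (heq ▸ Finset.subset_union_left) hAC
    have hsubBC : B ⊂ C :=
      ssubset_of_subset_of_ne (heq ▸ Finset.subset_union_right) hBC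
    have hrAC : rA < rC := rank_mono hrAlv hrClv hsubAC
    have hrBC : rB < rC := rank_mono hrBlv hrClv hsubBC
    -- both in the same chain leads to contradiction
    have hbothX : ∀ p q, b ≤ p → p < a₁ → b ≤ q → q < a₁ → A = X p → B = X q → False := by
      intro p q h1 h2 h3 h4 hAp hBq
      rcases lt_trichotomy p q with h | h | h
      · have hss : A ⊂ B := hAp ▸ hBq ▸ hXm p q h1 h h4
        exact hBC (by rw [← heq, Finset.union_eq_right.mpr hss.subset])
      · exact hAB (by rw [hAp, hBq, h])
      · have hss : B ⊂ A := hAp ▸ hBq ▸ hXm q p h3 h h2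
        exact hAC (by rw [← heq, Finset.union_eq_left.mpr hss.subset])
    have hbothY : ∀ p q, b ≤ p → p < a₁ → b ≤ q → q < a₁ → A = Y p → B = Y q → False := by
      intro p q h1 h2 h3 h4 hAp hBq
      rcases lt_trichotomy p q with h | h | h
      · have hss : A ⊂ B := hAp ▸ hBq ▸ hYm p q h1 h h4
        exact hBC (by rw [← heq, Finset.union_eq_right.mpr hss.subset])
      · exact hAB (by rw [hAp, hBq, h])
      · have hss : B ⊂ A := hAp ▸ hBq ▸ hYm q p h3 h h2
        exact hAC (by rw [← heq, Finset.union_eq_left.mpr hss.subset])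
    -- mixed chains: C is a union X p ∪ Y q
    have hmixed : ∀ p q, b ≤ p → p < a₁ → b ≤ q → q < a₁ → rA < a₁ → rB < a₁ →
        X p ∪ Y q = C → False := by
      intro p q h1 h2 h3 h4 h5 h6 heq'
      rcases hun p q h1 h2 h3 h4 with hnF | hlv | ⟨r, hr, hrt', hmem⟩
      · exact hnF (heq' ▸ level_subset hrClv)
      · -- C ∈ level a₁ : then C ∈ S, contradiction with C ∉ S
        rw [heq'] at hlv
        refine hC.2 (Finset.mem_filter.mpr ⟨hlv, ⟨p, (hmemJ p).mpr ⟨h1, h2⟩,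
          q, (hmemJ q).mpr ⟨h3, h4⟩, heq'.symm⟩⟩)
      · -- C has rank r > a₁
        rw [heq'] at hmem
        have hrCr : rC = r := rank_unique hrClv hmem hrCt hrt'
        rcases hrCsrc with hrCI | ⟨_, hlt, _⟩
        · -- apply key with i = a₁
          have hkey := key hrAlv hrBlv hrClv hrCt heq hAB (by omega : 1 ≤ a₁)
            (by omega : rA ≤ a₁) (by omega : rB ≤ a₁) (by omega : a₁ < rC)
          exact hind a₁ ha₁ rC hrCI hkey
        · omega
    -- a helper when the larger rank is in I
    have hkeyI : ∀ m, m ∈ I → rA ≤ m → rB ≤ m → m < rC → rC ∈ I → False := by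
      intro m hm h1 h2 h3 hrCI
      exact hind m hm rC hrCI
        (key hrAlv hrBlv hrClv hrCt heq hAB (hIt m hm).1 h1 h2 h3)
    -- case analysis on the source of C
    rcases hrCsrc with hrCI | ⟨hbC, hCa, hCform⟩
    · -- C has rank in I
      have ha₁rA : rA ∈ I → a₁ ≤ rA := ha₁min rA
      rcases hrAsrc with hAI | ⟨hbA, hAa, hAform⟩
      · rcases hrBsrc with hBI | ⟨hbB, hBa, hBform⟩
        · rcases le_total rA rB with h | h
          · exact hkeyI rB hBI h le_rfl hrBC hrCI
          · exact hkeyI rA hAI le_rfl h hrAC hrCI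
        · exact hkeyI rA hAI le_rfl (by have := ha₁min rA hAI; omega) hrAC hrCI
      · rcases hrBsrc with hBI | ⟨hbB, hBa, hBform⟩
        · exact hkeyI rB hBI (by have := ha₁min rB hBI; omega) le_rfl hrBC hrCI
        · -- both A and B in the chains
          rcases hAform with hAf | hAf <;> rcases hBform with hBf | hBf
          · exact hbothX rA rB hbA hAa hbB hBa hAf hBf
          · exact hmixed rA rB hbA hAa hbB hBa hAa hBa (by rw [← hAf, ← hBf]; exact heq)
          · exact hmixed rB rA hbB hBa hbA hAa hAa hBa
              (by rw [← hBf, ← hAf, Finset.union_comm]; exact heq)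
          · exact hbothY rA rB hbA hAa hbB hBa hAf hBf
    · -- C is in one of the chains, rank rC < a₁
      have hAch : b ≤ rA ∧ rA < a₁ ∧ (A = X rA ∨ A = Y rA) := by
        rcases hrAsrc with hAI | h
        · have := ha₁min rA hAI; omega
        · exact h
      have hBch : b ≤ rB ∧ rB < a₁ ∧ (B = X rB ∨ B = Y rB) := by
        rcases hrBsrc with hBI | h
        · have := ha₁min rB hBI; omega
        · exact h
      rcases hAch.2.2 with hAf | hAf <;> rcases hBch.2.2 with hBf | hBf
      · exact hbothX rA rB hAch.1 hAch.2.1 hBch.1 hBch.2.1 hAf hBf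
      · -- C = X rA ∪ Y rB but rank C < a₁: contradiction with hun
        rcases hun rA rB hAch.1 hAch.2.1 hBch.1 hBch.2.1 with hnF | hlv | ⟨r, hr, hrt', hmem⟩
        · exact hnF (by rw [← hAf, ← hBf, heq]; exact level_subset hrClv)
        · have : rC = a₁ := by
            refine rank_unique hrClv ?_ hrCt hat
            rw [← hAf, ← hBf, heq] at hlv
            exact hlv
          omega
        · have : rC = r := by
            refine rank_unique hrClv ?_ hrCt hrt'
            rw [← hAf, ← hBf, heq] at hmem
            exact hmem
          omega
      · rcases hun rB rA hBch.1 hBch.2.1 hAch.1 hAch.2.1 with hnF | hlv | ⟨r, hr, hrt', hmem⟩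
        · refine hnF ?_
          rw [← hBf, ← hAf, Finset.union_comm, heq]
          exact level_subset hrClv
        · have : rC = a₁ := by
            refine rank_unique hrClv ?_ hrCt hat
            rw [← hBf, ← hAf, Finset.union_comm, heq] at hlv
            exact hlv
          omega
        · have : rC = r := by
            refine rank_unique hrClv ?_ hrCt hrt'
            rw [← hBf, ← hAf, Finset.union_comm, heq] at hmem
            exact hmem
          omega
      · exact hbothY rA rB hAch.1 hAch.2.1 hBch.1 hBch.2.1 hAf hBf
  -- cardinality computations
  have hLcard : L.card = ∑ j ∈ I, (level F j).card := by
    rw [hL]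
    apply Finset.card_biUnion
    intro x hx y hy hxy
    show Disjoint (level F x) (level F y)
    rw [Finset.disjoint_left]
    intro W hWx hWy
    exact hxy (rank_unique hWx hWy (hIt x hx).2 (hIt y hy).2)
  have hJcard : J.card = a₁ - b := by rw [hJ, Nat.card_Icc]; omega
  have hCXcard : CX.card = a₁ - b := by
    rw [hCX, Finset.card_image_of_injOn, hJcard]
    intro p hp q hq hpq
    rw [Finset.mem_coe, hmemJ] at hp hq
    by_contra hne'
    rcases lt_or_gt_of_ne hne' with h | h
    · exact (hXm p q hp.1 h hq.2).ne hpq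
    · exact (hXm q p hq.1 h hp.2).ne hpq.symm
  have hCYcard : CY.card = a₁ - b := by
    rw [hCY, Finset.card_image_of_injOn, hJcard]
    intro p hp q hq hpq
    rw [Finset.mem_coe, hmemJ] at hp hq
    by_contra hne'
    rcases lt_or_gt_of_ne hne' with h | h
    · exact (hYm p q hp.1 h hq.2).ne hpq
    · exact (hYm q p hq.1 h hp.2).ne hpq.symm
  have hdLX : Disjoint L CX := by
    rw [Finset.disjoint_left]
    intro W hWL hWX
    rw [hL, Finset.mem_biUnion] at hWL
    obtain ⟨a, ha, hWa⟩ := hWL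
    rw [hCX, Finset.mem_image] at hWX
    obtain ⟨j, hj, rfl⟩ := hWX
    rw [hmemJ] at hj
    have := rank_unique hWa (hX j hj.1 hj.2) (hIt a ha).2 (by omega)
    have := ha₁min a ha
    omega
  have hdLY : Disjoint L CY := by
    rw [Finset.disjoint_left]
    intro W hWL hWY
    rw [hL, Finset.mem_biUnion] at hWL
    obtain ⟨a, ha, hWa⟩ := hWL
    rw [hCY, Finset.mem_image] at hWY
    obtain ⟨j, hj, rfl⟩ := hWY
    rw [hmemJ] at hj
    have := rank_unique hWa (hY j hj.1 hj.2) (hIt a ha).2 (by omega)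
    have := ha₁min a ha
    omega
  have hdXY : Disjoint CX CY := by
    rw [Finset.disjoint_left]
    intro W hWX hWY
    rw [hCX, Finset.mem_image] at hWX
    obtain ⟨j, hj, rfl⟩ := hWX
    rw [hCY, Finset.mem_image] at hWY
    obtain ⟨k, hk, hkeq⟩ := hWY
    rw [hmemJ] at hj hk
    exact hne j k hj.1 hj.2 hk.1 hk.2 hkeq.symm
  have hUcard : (L ∪ CX ∪ CY).card = (∑ j ∈ I, (level F j).card) + (a₁ - b) + (a₁ - b) := by
    rw [Finset.card_union_of_disjoint, Finset.card_union_of_disjoint hdLX,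
      hLcard, hCXcard, hCYcard]
    rw [Finset.disjoint_union_left]
    exact ⟨hdLY, hdXY⟩
  have hScard : S.card ≤ 1 := by
    rw [Finset.card_le_one]
    intro u hu v hv
    rw [hS, Finset.mem_filter] at hu hv
    obtain ⟨hu1, j1, hj1, k1, hk1, hu2⟩ := hu
    obtain ⟨hv1, j2, hj2, k2, hk2, hv2⟩ := hv
    rw [hmemJ] at hj1 hk1 hj2 hk2
    rw [hu2, hv2]
    exact huq j1 k1 j2 k2 hj1.1 hj1.2 hk1.1 hk1.2 hj2.1 hj2.2 hk2.1 hk2.2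
      (hu2 ▸ hu1) (hv2 ▸ hv1)
  have hle : (L ∪ CX ∪ CY).card ≤ G.card + S.card := by
    calc (L ∪ CX ∪ CY).card ≤ (G ∪ S).card := by
          apply Finset.card_le_card
          intro W hW
          rw [Finset.mem_union]
          by_cases hWS : W ∈ S
          · exact Or.inr hWS
          · exact Or.inl (by rw [hG, Finset.mem_sdiff]; exact ⟨hW, hWS⟩)
      _ ≤ G.card + S.card := Finset.card_union_le _ _
  have hαG : G.card ≤ α := hα.2 ⟨G, hGsub, hGuf, rfl⟩
  have hfin : (∑ j ∈ I, (level F j).card) + (a₁ - b) + (a₁ - b) ≤ α + 1 := by omega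
  rw [← Nat.cast_sum]
  omega
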